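/- Let X = (X_t)_{t∈[0,1]} be a real-valued stochastic process with E[X_t²] < ∞ for all t, satisfying (A2) with constants C₂ > 0, H₂ ∈ (0,1] and (B⁻). Let a ∈ (0, 1/4], n = ⌊1/a⌋, and set ξ_i = X_{ia} − X_{(i−1)a} for 2 ≤ i ≤ n. Then ∑_{i=2}^{n} ∑_{j=2}^{n} ( E[ξ_i ξ_j] )² ≤ 2 C₂² a^{4H₂−1}. -/

import Mathlib

open MeasureTheory Set

lemma intMul {Ω : Type*} [MeasurableSpace Ω] {P : Measure Ω} {f g : Ω → ℝ}
    (hf : MemLp f 2 P) (hg : MemLp g 2 P) :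
    Integrable (fun ω => f ω * g ω) P := by
  have hb : Integrable (fun ω => (f ω ^ 2 + g ω ^ 2) / 2) P :=
    (hf.integrable_sq.add hg.integrable_sq).div_const 2
  refine Integrable.mono' hb (hf.1.mul hg.1) ?_
  filter_upwards with ω
  have h := two_mul_le_add_sq (|f ω|) (|g ω|)
  simp only [Real.norm_eq_abs, abs_mul, sq_abs] at h ⊢
  nlinarith [abs_nonneg (f ω), abs_nonneg (g ω)]

lemma intCS {Ω : Type*} [MeasurableSpace Ω] {P : Measure Ω} {f g : Ω → ℝ}
    (hf : MemLp f 2 P) (hg : MemLp g 2 P) :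
    (∫ ω, f ω * g ω ∂P) ^ 2 ≤ (∫ ω, f ω * f ω ∂P) * (∫ ω, g ω * g ω ∂P) := by
  set A := ∫ ω, f ω * f ω ∂P with hA
  set B := ∫ ω, f ω * g ω ∂P with hB
  set C := ∫ ω, g ω * g ω ∂P with hC
  have key : ∀ t : ℝ, 0 ≤ A * (t * t) + (2 * B) * t + C := by
    intro t
    have h1 : Integrable (fun ω => t * t * (f ω * f ω)) P := (intMul hf hf).const_mul _
    have h2 : Integrable (fun ω => 2 * t * (f ω * g ω)) P := (intMul hf hg).const_mul _
    have h3 : Integrable (fun ω => g ω * g ω) P := intMul hg hg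
    have h23 : Integrable (fun ω => 2 * t * (f ω * g ω) + g ω * g ω) P := h2.add h3
    have h0 : 0 ≤ ∫ ω, (t * f ω + g ω) ^ 2 ∂P := integral_nonneg fun ω => sq_nonneg _
    have expand : (fun ω => (t * f ω + g ω) ^ 2)
        = fun ω => t * t * (f ω * f ω) + (2 * t * (f ω * g ω) + g ω * g ω) := by
      funext ω; ring
    rw [expand, integral_add h1 h23, integral_add h2 h3,
      integral_const_mul, integral_const_mul] at h0
    nlinarith [h0]
  have hd := discrim_le_zero key
  rw [discrim] at hd
  nlinarith [hd]

/-- Inequality (3.6): for a square-integrable process on `[0,1]` satisfying (A2) and (B⁻),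
with `a ∈ (0,1/4]`, `n = ⌊1/a⌋` and `ξᵢ = X_{ia} - X_{(i-1)a}`, one has
`∑_{i,j=2}^{n} (E[ξᵢ ξⱼ])² ≤ 2 C₂² a^{4H₂ - 1}`. -/
theorem sum_sq_crossCov_le_of_Bminus {Ω : Type*} [MeasurableSpace Ω]
    (P : Measure Ω) [IsProbabilityMeasure P] (X : ℝ → Ω → ℝ)
    (C₂ H₂ a : ℝ)
    (hL2 : ∀ t ∈ Set.Icc (0 : ℝ) 1, MemLp (X t) 2 P)
    (hC₂ : 0 < C₂) (hH₂ : H₂ ∈ Set.Ioc (0 : ℝ) 1)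
    (hA2 : ∀ s ∈ Set.Icc (0 : ℝ) 1, ∀ t ∈ Set.Icc (0 : ℝ) 1,
      ∫ ω, (X t ω - X s ω) ^ 2 ∂P ≤ C₂ * |t - s| ^ (2 * H₂))
    (hB : ∀ s₁ t₁ s₂ t₂ : ℝ, 0 ≤ s₁ → s₁ ≤ t₁ → t₁ ≤ s₂ → s₂ ≤ t₂ → t₂ ≤ 1 →
      ∫ ω, (X t₁ ω - X s₁ ω) * (X t₂ ω - X s₂ ω) ∂P ≤ 0)
    (ha : a ∈ Set.Ioc (0 : ℝ) (1 / 4)) :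
    ∑ i ∈ Finset.Icc 2 ⌊1 / a⌋₊, ∑ j ∈ Finset.Icc 2 ⌊1 / a⌋₊,
      (∫ ω, (X (i * a) ω - X ((i - 1 : ℝ) * a) ω)
            * (X (j * a) ω - X ((j - 1 : ℝ) * a) ω) ∂P) ^ 2
      ≤ 2 * C₂ ^ 2 * a ^ (4 * H₂ - 1) := by
  obtain ⟨ha0, ha4⟩ := ha
  set n := ⌊1 / a⌋₊ with hn
  set S := Finset.Icc 2 n with hS
  set ξ : ℕ → Ω → ℝ := fun i ω => X (i * a) ω - X ((i - 1 : ℝ) * a) ω with hξ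
  set c : ℕ → ℕ → ℝ := fun i j => ∫ ω, ξ i ω * ξ j ω ∂P with hc
  set M := C₂ * a ^ (2 * H₂) with hM
  have hM0 : 0 ≤ M := mul_nonneg hC₂.le (Real.rpow_nonneg ha0.le _)
  -- endpoint bounds
  have hend : ∀ i ∈ S, (0:ℝ) ≤ ((i:ℝ) - 1) * a ∧ ((i:ℝ) - 1) * a ≤ (i:ℝ) * a ∧ (i:ℝ) * a ≤ 1 := by
    intro i hi
    rw [hS, Finset.mem_Icc] at hi
    have h2i : (2:ℝ) ≤ (i:ℝ) := by exact_mod_cast hi.1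
    have hin : (i:ℝ) ≤ (n:ℝ) := by exact_mod_cast hi.2
    have hfl : (n:ℝ) ≤ 1 / a := Nat.floor_le (by positivity)
    refine ⟨by nlinarith, by nlinarith, ?_⟩
    have : (i:ℝ) * a ≤ (1 / a) * a := by nlinarith
    rwa [one_div, inv_mul_cancel₀ ha0.ne'] at this
  have hmemIcc : ∀ i ∈ S, ((i:ℝ) - 1) * a ∈ Set.Icc (0:ℝ) 1 ∧ (i:ℝ) * a ∈ Set.Icc (0:ℝ) 1 := by
    intro i hi
    obtain ⟨h1, h2, h3⟩ := hend i hi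
    exact ⟨⟨h1, h2.trans h3⟩, ⟨h1.trans h2, h3⟩⟩
  have hmem : ∀ i ∈ S, MemLp (ξ i) 2 P := by
    intro i hi
    obtain ⟨hs, ht⟩ := hmemIcc i hi
    exact (hL2 _ ht).sub (hL2 _ hs)
  -- integrability of products
  have hint : ∀ i ∈ S, ∀ j ∈ S, Integrable (fun ω => ξ i ω * ξ j ω) P :=
    fun i hi j hj => intMul (hmem i hi) (hmem j hj)
  -- diagonal bound
  have hdiag : ∀ i ∈ S, c i i ≤ M := by
    intro i hi
    obtain ⟨hs, ht⟩ := hmemIcc i hi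
    have h := hA2 _ hs _ ht
    have habs : |(i:ℝ) * a - ((i:ℝ) - 1) * a| = a := by
      have : (i:ℝ) * a - ((i:ℝ) - 1) * a = a := by ring
      rw [this, abs_of_pos ha0]
    rw [habs] at h
    refine le_trans (le_of_eq ?_) h
    simp only [hc, hξ]
    congr 1; funext ω; ring
  have hdiag0 : ∀ i, 0 ≤ c i i := fun i => integral_nonneg fun ω => mul_self_nonneg _
  -- symmetry
  have hsymm : ∀ i j, c i j = c j i := by
    intro i j; simp only [hc]; congr 1; funext ω; ring
  -- off-diagonal nonpositivity
  have hoff : ∀ i ∈ S, ∀ j ∈ S, i ≠ j → c i j ≤ 0 := by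
    have key : ∀ i ∈ S, ∀ j ∈ S, i < j → c i j ≤ 0 := by
      intro i hi j hj hij
      obtain ⟨hi0, hii, hi1⟩ := hend i hi
      obtain ⟨hj0, hjj, hj1⟩ := hend j hj
      have hmid : (i:ℝ) * a ≤ ((j:ℝ) - 1) * a := by
        have : (i:ℝ) + 1 ≤ (j:ℝ) := by exact_mod_cast hij
        nlinarith
      exact hB _ _ _ _ hi0 hii hmid hjj hj1
    intro i hi j hj hij
    rcases lt_or_gt_of_ne hij with h | h
    · exact key i hi j hj h
    · rw [hsymm]; exact key j hj i hi h
  -- Cauchy-Schwarz: |c i j| ≤ M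
  have habsle : ∀ i ∈ S, ∀ j ∈ S, |c i j| ≤ M := by
    intro i hi j hj
    have hcs : (c i j) ^ 2 ≤ c i i * c j j := intCS (hmem i hi) (hmem j hj)
    have : (c i j) ^ 2 ≤ M ^ 2 := by
      calc (c i j) ^ 2 ≤ c i i * c j j := hcs
        _ ≤ M * M := mul_le_mul (hdiag i hi) (hdiag j hj) (hdiag0 j) hM0
        _ = M ^ 2 := by ring
    calc |c i j| = Real.sqrt ((c i j) ^ 2) := (Real.sqrt_sq_eq_abs _).symm
      _ ≤ Real.sqrt (M ^ 2) := Real.sqrt_le_sqrt this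
      _ = M := Real.sqrt_sq hM0
  -- total sum of c is nonnegative
  have hsum_nonneg : 0 ≤ ∑ i ∈ S, ∑ j ∈ S, c i j := by
    have hexp : ∑ i ∈ S, ∑ j ∈ S, c i j = ∫ ω, (∑ i ∈ S, ξ i ω) ^ 2 ∂P := by
      have h1 : ∀ ω, (∑ i ∈ S, ξ i ω) ^ 2 = ∑ i ∈ S, ∑ j ∈ S, ξ i ω * ξ j ω := by
        intro ω; rw [sq, Finset.sum_mul_sum]
      calc ∑ i ∈ S, ∑ j ∈ S, c i j
          = ∑ i ∈ S, ∫ ω, ∑ j ∈ S, ξ i ω * ξ j ω ∂P := by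
            refine Finset.sum_congr rfl fun i hi => ?_
            rw [integral_finset_sum S (fun j hj => hint i hi j hj)]
        _ = ∫ ω, ∑ i ∈ S, ∑ j ∈ S, ξ i ω * ξ j ω ∂P := by
            rw [integral_finset_sum S (fun i hi => integrable_finset_sum S (fun j hj => hint i hi j hj))]
        _ = ∫ ω, (∑ i ∈ S, ξ i ω) ^ 2 ∂P := by
            congr 1; funext ω; rw [h1]
    rw [hexp]
    exact integral_nonneg fun ω => sq_nonneg _
  -- sum of |c| bounded by twice diagonal sum
  have habs_sum : ∑ i ∈ S, ∑ j ∈ S, |c i j| ≤ 2 * ∑ i ∈ S, c i i := by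
    have hpt : ∀ i ∈ S, ∀ j ∈ S, |c i j| ≤ (if i = j then 2 * c i i else 0) - c i j := by
      intro i hi j hj
      by_cases h : i = j
      · subst h; rw [if_pos rfl, abs_of_nonneg (hdiag0 i)]; linarith
      · simp only [if_neg h]
        rw [abs_of_nonpos (hoff i hi j hj h)]; linarith
    calc ∑ i ∈ S, ∑ j ∈ S, |c i j|
        ≤ ∑ i ∈ S, ∑ j ∈ S, ((if i = j then 2 * c i i else 0) - c i j) :=
          Finset.sum_le_sum fun i hi => Finset.sum_le_sum fun j hj => hpt i hi j hj
      _ = (∑ i ∈ S, ∑ j ∈ S, if i = j then 2 * c i i else 0) - ∑ i ∈ S, ∑ j ∈ S, c i j := by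
          rw [← Finset.sum_sub_distrib]
          exact Finset.sum_congr rfl fun i _ => by rw [← Finset.sum_sub_distrib]
      _ ≤ ∑ i ∈ S, ∑ j ∈ S, if i = j then 2 * c i i else 0 := by linarith
      _ = ∑ i ∈ S, 2 * c i i := by
          refine Finset.sum_congr rfl fun i hi => ?_
          rw [Finset.sum_ite_eq S i (fun _ => 2 * c i i), if_pos hi]
      _ = 2 * ∑ i ∈ S, c i i := by rw [Finset.mul_sum]
  -- diagonal sum bound
  have hdiag_sum : ∑ i ∈ S, c i i ≤ (1 / a) * M := by
    have hcard : (S.card : ℝ) ≤ 1 / a := by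
      have h1 : S.card ≤ n := by
        rw [hS, Nat.card_Icc]; omega
      have h2 : (n:ℝ) ≤ 1 / a := Nat.floor_le (by positivity)
      exact le_trans (by exact_mod_cast h1) h2
    calc ∑ i ∈ S, c i i ≤ ∑ _i ∈ S, M := Finset.sum_le_sum fun i hi => hdiag i hi
      _ = (S.card : ℝ) * M := by rw [Finset.sum_const, nsmul_eq_mul]
      _ ≤ (1 / a) * M := mul_le_mul_of_nonneg_right hcard hM0
  -- main chain
  have hmain : ∑ i ∈ S, ∑ j ∈ S, (c i j) ^ 2 ≤ 2 * C₂ ^ 2 * a ^ (4 * H₂ - 1) := by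
    have step1 : ∑ i ∈ S, ∑ j ∈ S, (c i j) ^ 2 ≤ M * ∑ i ∈ S, ∑ j ∈ S, |c i j| := by
      rw [Finset.mul_sum]
      refine Finset.sum_le_sum fun i hi => ?_
      rw [Finset.mul_sum]
      refine Finset.sum_le_sum fun j hj => ?_
      calc (c i j) ^ 2 = |c i j| * |c i j| := by rw [← abs_mul, ← sq, abs_of_nonneg (sq_nonneg _)]
        _ ≤ M * |c i j| := mul_le_mul_of_nonneg_right (habsle i hi j hj) (abs_nonneg _)
    have step2 : M * (∑ i ∈ S, ∑ j ∈ S, |c i j|) ≤ M * (2 * ((1 / a) * M)) := by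
      refine mul_le_mul_of_nonneg_left ?_ hM0
      calc ∑ i ∈ S, ∑ j ∈ S, |c i j| ≤ 2 * ∑ i ∈ S, c i i := habs_sum
        _ ≤ 2 * ((1 / a) * M) := by linarith [hdiag_sum]
    have heq : M * (2 * ((1 / a) * M)) = 2 * C₂ ^ 2 * a ^ (4 * H₂ - 1) := by
      rw [hM]
      have h1 : a ^ (2 * H₂) * a ^ (2 * H₂) = a ^ (4 * H₂) := by
        rw [← Real.rpow_add ha0]; ring_nf
      have h2 : a ^ (4 * H₂ - 1) = a ^ (4 * H₂) / a := by
        rw [Real.rpow_sub ha0, Real.rpow_one]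
      rw [h2]
      field_simp
      rw [mul_comm H₂ 4, ← h1]; ring
    linarith [le_trans step1 step2, le_of_eq heq]
  exact hmain
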